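/- For all real numbers φ, θ, z: exp(φ•(cos θ • X + sin θ • Y)) · exp(z•Z) equals the 2×2 complex matrix with rows (cos(φ/2)·e^{iz/2}, e^{i(θ−z/2)}·sin(φ/2)) and (−e^{−i(θ−z/2)}·sin(φ/2), cos(φ/2)·e^{−iz/2}). -/

import Mathlib

open scoped Matrix

/-- Halved Pauli matrix `X` generating `su(2)`. -/
noncomputable def X : Matrix (Fin 2) (Fin 2) ℂ := (1 / 2 : ℂ) • !![0, 1; -1, 0]

/-- Halved Pauli matrix `Y` generating `su(2)`. -/
noncomputable def Y : Matrix (Fin 2) (Fin 2) ℂ :=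
  (1 / 2 : ℂ) • !![0, Complex.I; Complex.I, 0]

/-- Halved Pauli matrix `Z` generating `su(2)`. -/
noncomputable def Z : Matrix (Fin 2) (Fin 2) ℂ :=
  (1 / 2 : ℂ) • !![Complex.I, 0; 0, -Complex.I]

/-- The cylindrical-coordinates matrix form of elements of `SU(2)`:
`exp(φ•(cos θ • X + sin θ • Y)) · exp(z•Z)` is the matrix with rows
`(cos(φ/2)e^{iz/2}, e^{i(θ−z/2)} sin(φ/2))` and `(−e^{−i(θ−z/2)} sin(φ/2), cos(φ/2)e^{−iz/2})`. -/
lemma exp_smul_sq_neg_one (M : Matrix (Fin 2) (Fin 2) ℂ) (h : M * M = -1) (t : ℝ) :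
    NormedSpace.exp (t • M) =
      Real.cos t • (1 : Matrix (Fin 2) (Fin 2) ℂ) + Real.sin t • M := by
  letI : SeminormedRing (Matrix (Fin 2) (Fin 2) ℂ) := Matrix.linftyOpSemiNormedRing
  letI : NormedRing (Matrix (Fin 2) (Fin 2) ℂ) := Matrix.linftyOpNormedRing
  letI : NormedAlgebra ℝ (Matrix (Fin 2) (Fin 2) ℂ) := Matrix.linftyOpNormedAlgebra
  letI : NormedAlgebra ℂ (Matrix (Fin 2) (Fin 2) ℂ) := Matrix.linftyOpNormedAlgebra
  set f := Complex.liftAux M h with hf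
  have hcont : Continuous f := f.toLinearMap.continuous_of_finiteDimensional
  have key := NormedSpace.map_exp f hcont ((t : ℂ) * Complex.I)
  have h1 : f ((t : ℂ) * Complex.I) = t • M := by
    rw [Complex.liftAux_apply]
    simp
  have h2 : NormedSpace.exp ((t : ℂ) * Complex.I) = Complex.exp ((t : ℂ) * Complex.I) := by
    rw [Complex.exp_eq_exp_ℂ]
  rw [h1, h2, Complex.exp_mul_I] at key
  refine key.symm.trans ?_
  rw [Complex.liftAux_apply]
  simp [Algebra.algebraMap_eq_smul_one, Complex.real_smul, ← Complex.ofReal_cos,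
    ← Complex.ofReal_sin]

theorem su2_cylindrical_matrix (φ θ z : ℝ) :
    NormedSpace.exp (φ • (Real.cos θ • X + Real.sin θ • Y)) *
        NormedSpace.exp (z • Z) =
      !![(Real.cos (φ / 2) : ℂ) * Complex.exp (Complex.I * ((z / 2 : ℝ) : ℂ)),
          Complex.exp (Complex.I * ((θ - z / 2 : ℝ) : ℂ)) * (Real.sin (φ / 2) : ℂ);
          -(Complex.exp (-(Complex.I * ((θ - z / 2 : ℝ) : ℂ))) * (Real.sin (φ / 2) : ℂ)),
          (Real.cos (φ / 2) : ℂ) * Complex.exp (-(Complex.I * ((z / 2 : ℝ) : ℂ)))] := by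
  have expI : ∀ x : ℝ, Complex.exp (Complex.I * (x : ℂ)) =
      (Real.cos x : ℂ) + (Real.sin x : ℂ) * Complex.I := by
    intro x
    rw [mul_comm, Complex.exp_mul_I, ← Complex.ofReal_cos, ← Complex.ofReal_sin]
  have expNI : ∀ x : ℝ, Complex.exp (-(Complex.I * (x : ℂ))) =
      (Real.cos x : ℂ) - (Real.sin x : ℂ) * Complex.I := by
    intro x
    have h : -(Complex.I * (x : ℂ)) = ((-x : ℝ) : ℂ) * Complex.I := by push_cast; ring
    rw [h, Complex.exp_mul_I, ← Complex.ofReal_cos, ← Complex.ofReal_sin, Real.cos_neg,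
      Real.sin_neg]
    push_cast
    ring
  set M₁ : Matrix (Fin 2) (Fin 2) ℂ :=
    !![0, Complex.exp (Complex.I * (θ : ℂ)); -Complex.exp (-(Complex.I * (θ : ℂ))), 0] with hM₁
  set M₂ : Matrix (Fin 2) (Fin 2) ℂ := !![Complex.I, 0; 0, -Complex.I] with hM₂
  have hM₁sq : M₁ * M₁ = -1 := by
    ext i j
    fin_cases i <;> fin_cases j <;>
      simp [hM₁, Matrix.mul_apply, Fin.sum_univ_two, Matrix.one_apply, ← Complex.exp_add]
  have hM₂sq : M₂ * M₂ = -1 := by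
    ext i j
    fin_cases i <;> fin_cases j <;>
      simp [hM₂, Matrix.mul_apply, Fin.sum_univ_two, Matrix.one_apply, Complex.I_mul_I]
  have e1 : φ • (Real.cos θ • X + Real.sin θ • Y) = (φ / 2) • M₁ := by
    ext i j
    fin_cases i <;> fin_cases j <;>
      simp [hM₁, X, Y, expI, expNI, Complex.real_smul] <;> push_cast <;> ring
  have e2 : z • Z = (z / 2) • M₂ := by
    ext i j
    fin_cases i <;> fin_cases j <;>
      simp [hM₂, Z, Complex.real_smul] <;> push_cast <;> ring
  rw [e1, e2, exp_smul_sq_neg_one M₁ hM₁sq, exp_smul_sq_neg_one M₂ hM₂sq,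
    expI (z / 2), expNI (z / 2), expI (θ - z / 2), expNI (θ - z / 2)]
  ext i j
  fin_cases i <;> fin_cases j <;>
    simp [hM₁, hM₂, expI θ, expNI θ, Matrix.mul_apply, Fin.sum_univ_two, Matrix.one_apply,
      Complex.real_smul, Real.cos_sub, Real.sin_sub]
  all_goals push_cast
  all_goals ring_nf
  all_goals first
    | tauto
    | (simp only [Complex.I_sq]; ring)
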